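/- Let (R, m) be a local ring and A a finite abelian group of order d such that d is invertible in R. Let R[A] denote the group algebra of A over R, with counit ε : R[A] → R (sum of coefficients) and comultiplication Δ : R[A] → R[A] ⊗_R R[A] (λ ↦ λ ⊗ λ on group elements). Let I ⊆ R[A] be an ideal with ε(I) = 0 and Δ(I) ⊆ I ⊗ R[A] + R[A] ⊗ I (as R-submodules of R[A] ⊗_R R[A]). If g ∈ R[A] satisfies ε(g) = 1, Δ(g) − g ⊗ g ∈ I ⊗ R[A] + R[A] ⊗ I, and g − 1 ∈ m·R[A] + I, then g − 1 ∈ I. In other words, the only group-like element of R[A]/I congruent to 1 modulo m·(R[A]/I) is 1. -/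

import Mathlib

open TensorProduct

/-- The counit of the group algebra `R[A]`: the sum of the coefficients (the `R`-linear
extension of `λ ↦ 1`). -/
noncomputable def groupAlgebraCounit (R A : Type*) [CommRing R] [AddCommGroup A]
    (x : AddMonoidAlgebra R A) : R :=
  x.coeff.sum fun _ r => r

/-- The comultiplication of the group algebra `R[A]`: the `R`-linear extension of
`λ ↦ λ ⊗ λ`. -/
noncomputable def groupAlgebraComul (R A : Type*) [CommRing R] [AddCommGroup A]
    (x : AddMonoidAlgebra R A) :
    AddMonoidAlgebra R A ⊗[R] AddMonoidAlgebra R A :=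
  x.coeff.sum fun a r =>
    r • (AddMonoidAlgebra.single a 1 ⊗ₜ[R] AddMonoidAlgebra.single a 1)

/-- The `R`-submodule `I ⊗ R[A] + R[A] ⊗ I` of `R[A] ⊗_R R[A]`: the span of the simple
tensors having one factor in `I`. -/
noncomputable def groupAlgebraMixedTensor (R A : Type*) [CommRing R] [AddCommGroup A]
    (I : Ideal (AddMonoidAlgebra R A)) :
    Submodule R (AddMonoidAlgebra R A ⊗[R] AddMonoidAlgebra R A) :=
  Submodule.span R
    ({t | ∃ a ∈ I, ∃ b, t = a ⊗ₜ[R] b} ∪ {t | ∃ a, ∃ b ∈ I, t = a ⊗ₜ[R] b})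

set_option maxHeartbeats 1000000

section Aux
variable (R A : Type*) [CommRing R] [AddCommGroup A]

noncomputable def psiHom (n : ℕ) : AddMonoidAlgebra R A →ₗ[R] AddMonoidAlgebra R A :=
  AddMonoidAlgebra.mapDomainLinearMap R R (fun a => n • a)

noncomputable def Tmap (n : ℕ) :
    AddMonoidAlgebra R A ⊗[R] AddMonoidAlgebra R A →ₗ[R] AddMonoidAlgebra R A :=
  TensorProduct.lift ((LinearMap.mul R (AddMonoidAlgebra R A)).compl₂ (psiHom R A n))

theorem psi_single (n : ℕ) (a : A) (r : R) :
    psiHom R A n (AddMonoidAlgebra.single a r) = AddMonoidAlgebra.single (n • a) r := by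
  exact AddMonoidAlgebra.mapDomainLinearMap_single _ _ _

theorem Tmap_tmul (n : ℕ) (x y : AddMonoidAlgebra R A) :
    Tmap R A n (x ⊗ₜ[R] y) = x * psiHom R A n y := by
  simp [Tmap]

theorem counit_single (a : A) (r : R) :
    groupAlgebraCounit R A (AddMonoidAlgebra.single a r) = r := by
  simp [groupAlgebraCounit, Finsupp.sum_single_index]

theorem counit_add (x y : AddMonoidAlgebra R A) :
    groupAlgebraCounit R A (x + y) = groupAlgebraCounit R A x + groupAlgebraCounit R A y :=
  Finsupp.sum_add_index' (fun _ => rfl) (fun _ _ _ => rfl)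

theorem counit_zero : groupAlgebraCounit R A 0 = 0 := by
  simp [groupAlgebraCounit]

theorem comul_single (a : A) (r : R) :
    groupAlgebraComul R A (AddMonoidAlgebra.single a r)
      = r • (AddMonoidAlgebra.single a 1 ⊗ₜ[R] AddMonoidAlgebra.single a (1:R)) := by
  simp only [groupAlgebraComul]
  exact Finsupp.sum_single_index (by simp)

theorem comul_add (x y : AddMonoidAlgebra R A) :
    groupAlgebraComul R A (x + y) = groupAlgebraComul R A x + groupAlgebraComul R A y :=
  Finsupp.sum_add_index' (fun _ => by simp) (fun _ r s => add_smul r s _)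

theorem comul_zero : groupAlgebraComul R A 0 = 0 := by
  simp [groupAlgebraComul]

theorem T_comul (n : ℕ) (x : AddMonoidAlgebra R A) :
    Tmap R A n (groupAlgebraComul R A x) = psiHom R A (n + 1) x := by
  induction x using AddMonoidAlgebra.induction_linear with
  | zero => simp [comul_zero]
  | add x y hx hy => rw [comul_add, map_add, hx, hy, map_add]
  | single a r =>
      rw [comul_single, map_smul, Tmap_tmul, psi_single, psi_single,
        AddMonoidAlgebra.single_mul_single, one_mul]
      rw [show a + n • a = (n + 1) • a by rw [succ_nsmul, add_comm]]
      rw [AddMonoidAlgebra.smul_single', mul_one]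

theorem psi_const (n : ℕ) (h : ∀ a : A, n • a = 0) (x : AddMonoidAlgebra R A) :
    psiHom R A n x = AddMonoidAlgebra.single 0 (groupAlgebraCounit R A x) := by
  induction x using AddMonoidAlgebra.induction_linear with
  | zero => simp [counit_zero]
  | add x y hx hy =>
      rw [map_add, hx, hy, counit_add, AddMonoidAlgebra.single_add]
  | single a r => rw [psi_single, counit_single, h a]

end Aux

section Main
variable {R A : Type*} [CommRing R] [AddCommGroup A]
variable {I : Ideal (AddMonoidAlgebra R A)}

theorem Tmap_mem (n : ℕ) (hpsi : ∀ y ∈ I, psiHom R A n y ∈ I)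
    {t : AddMonoidAlgebra R A ⊗[R] AddMonoidAlgebra R A}
    (ht : t ∈ groupAlgebraMixedTensor R A I) : Tmap R A n t ∈ I := by
  have hle : groupAlgebraMixedTensor R A I ≤
      Submodule.comap (Tmap R A n) (Submodule.restrictScalars R I) := by
    rw [groupAlgebraMixedTensor, Submodule.span_le]
    rintro t (⟨a, ha, b, rfl⟩ | ⟨a, b, hb, rfl⟩) <;>
      simp only [SetLike.mem_coe, Submodule.mem_comap, Tmap_tmul,
        Submodule.restrictScalars_mem]
    · exact I.mul_mem_right _ ha
    · exact I.mul_mem_left _ (hpsi b hb)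
  exact hle ht

theorem psi_mem (hcounit : ∀ x ∈ I, groupAlgebraCounit R A x = 0)
    (hcomul : ∀ x ∈ I, groupAlgebraComul R A x ∈ groupAlgebraMixedTensor R A I)
    (n : ℕ) : ∀ y ∈ I, psiHom R A n y ∈ I := by
  induction n with
  | zero =>
      intro y hy
      rw [psi_const R A 0 (fun a => zero_smul ℕ a) y, hcounit y hy]
      simp
  | succ n ih =>
      intro y hy
      rw [← T_comul]
      exact Tmap_mem n ih (hcomul y hy)

theorem psi_g_mem (hcounit : ∀ x ∈ I, groupAlgebraCounit R A x = 0)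
    (hcomul : ∀ x ∈ I, groupAlgebraComul R A x ∈ groupAlgebraMixedTensor R A I)
    {g : AddMonoidAlgebra R A} (hg1 : groupAlgebraCounit R A g = 1)
    (hggl : groupAlgebraComul R A g - g ⊗ₜ[R] g ∈ groupAlgebraMixedTensor R A I)
    (n : ℕ) : psiHom R A n g - g ^ n ∈ I := by
  induction n with
  | zero =>
      rw [psi_const R A 0 (fun a => zero_smul ℕ a) g, hg1, pow_zero]
      rw [show AddMonoidAlgebra.single (0:A) (1:R) = 1 from rfl]
      simp
  | succ n ih =>
      have h1 : Tmap R A n (groupAlgebraComul R A g - g ⊗ₜ[R] g) ∈ I :=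
        Tmap_mem n (psi_mem hcounit hcomul n) hggl
      rw [map_sub, T_comul, Tmap_tmul] at h1
      have h2 : g * (psiHom R A n g - g ^ n) ∈ I := I.mul_mem_left g ih
      have := I.add_mem h1 h2
      rw [mul_sub] at this
      have heq : psiHom R A (n+1) g - g * psiHom R A n g
          + (g * psiHom R A n g - g * g ^ n) = psiHom R A (n+1) g - g ^ (n+1) := by
        rw [pow_succ]
        ring
      rwa [heq] at this

end Main

theorem binom_aux {S : Type*} [CommRing S] (y : S) (n : ℕ) :
    ∃ w : S, (1 + y) ^ n = 1 + n * y + y ^ 2 * w := by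
  induction n with
  | zero => exact ⟨0, by simp⟩
  | succ n ih =>
      obtain ⟨w, hw⟩ := ih
      refine ⟨w + n + y * w, ?_⟩
      rw [pow_succ, hw]
      push_cast
      ring


/-- Let `(R, m)` be a local ring and `A` a finite abelian group whose order is invertible in
`R`.  Let `I ⊆ R[A]` be an ideal with `ε(I) = 0` and `Δ(I) ⊆ I ⊗ R[A] + R[A] ⊗ I`.  If
`g ∈ R[A]` satisfies `ε(g) = 1`, `Δ(g) − g ⊗ g ∈ I ⊗ R[A] + R[A] ⊗ I`, and
`g − 1 ∈ m·R[A] + I`, then `g − 1 ∈ I`:  the only group-like element of `R[A]/I` congruent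
to `1` modulo `m` is `1`. -/
theorem stacky_covers_grouplike_congruent_one (R A : Type*) [CommRing R] [IsLocalRing R]
    [AddCommGroup A] [Fintype A] (hd : IsUnit ((Fintype.card A : R)))
    (I : Ideal (AddMonoidAlgebra R A))
    (hcounit : ∀ x ∈ I, groupAlgebraCounit R A x = 0)
    (hcomul : ∀ x ∈ I, groupAlgebraComul R A x ∈ groupAlgebraMixedTensor R A I)
    (g : AddMonoidAlgebra R A)
    (hg1 : groupAlgebraCounit R A g = 1)
    (hggl : groupAlgebraComul R A g - g ⊗ₜ[R] g ∈ groupAlgebraMixedTensor R A I)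
    (hgm : g - 1 ∈
      Ideal.map (algebraMap R (AddMonoidAlgebra R A)) (IsLocalRing.maximalIdeal R) + I) :
    g - 1 ∈ I := by
  classical
  set d := Fintype.card A with hdcard
  -- step 1 : g ^ d - 1 ∈ I
  have hgd : g ^ d - 1 ∈ I := by
    have h1 := psi_g_mem hcounit hcomul hg1 hggl d
    have h2 : psiHom R A d g = 1 := by
      rw [psi_const R A d (fun a => card_nsmul_eq_zero) g, hg1]
      rfl
    rw [h2] at h1
    simpa using I.neg_mem h1
  -- quotient setup
  haveI : Module.Finite R (AddMonoidAlgebra R A) :=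
    inferInstance
  set Q := AddMonoidAlgebra R A ⧸ I with hQ
  haveI : Module.Finite R Q :=
    Module.Finite.of_surjective (Ideal.Quotient.mkₐ R I).toLinearMap
      (Ideal.Quotient.mkₐ_surjective R I)
  haveI : Algebra.IsIntegral R Q := Algebra.IsIntegral.of_finite R Q
  set π := Ideal.Quotient.mk I with hπ
  set N := Ideal.map (algebraMap R Q) (IsLocalRing.maximalIdeal R) with hN
  -- any element of the form algebraMap c + q with c a unit and q ∈ N is a unit
  have hunit : ∀ q ∈ N, ∀ c : R, IsUnit c → IsUnit (algebraMap R Q c + q) := by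
    intro q hq c hc
    by_contra hu
    have hne : Ideal.span {algebraMap R Q c + q} ≠ ⊤ := fun h =>
      hu (Ideal.span_singleton_eq_top.mp h)
    obtain ⟨M, hM, hle⟩ := Ideal.exists_le_maximal _ hne
    have hzM : algebraMap R Q c + q ∈ M := hle (Ideal.subset_span rfl)
    have hcomapM : (M.comap (algebraMap R Q)).IsMaximal :=
      Ideal.isMaximal_comap_of_isIntegral_of_isMaximal M
    have hcomap_eq : M.comap (algebraMap R Q) = IsLocalRing.maximalIdeal R :=
      IsLocalRing.eq_maximalIdeal hcomapM
    have hNM : N ≤ M := by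
      rw [hN, Ideal.map_le_iff_le_comap, hcomap_eq]
    have hqM : q ∈ M := hNM hq
    have hcM : algebraMap R Q c ∈ M := by
      have : algebraMap R Q c = (algebraMap R Q c + q) - q := by ring
      rw [this]; exact M.sub_mem hzM hqM
    exact hM.ne_top (Ideal.eq_top_of_isUnit_mem M hcM (hc.map (algebraMap R Q)))
  -- pass to the quotient
  have hy : π (g - 1) ∈ N := by
    rw [Ideal.add_eq_sup] at hgm
    obtain ⟨s, hs, t, ht, hst⟩ := Submodule.mem_sup.mp hgm
    have : π (g - 1) = π s := by
      rw [← hst, map_add, Ideal.Quotient.eq_zero_iff_mem.mpr ht, add_zero]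
    rw [this]
    have := Ideal.mem_map_of_mem π hs
    rwa [Ideal.map_map, Ideal.Quotient.mk_comp_algebraMap] at this
  obtain ⟨w, hw⟩ := binom_aux (π (g - 1)) d
  have hone : 1 + π (g - 1) = π g := by rw [map_sub, map_one]; ring
  have hgd1 : π g ^ d = 1 := by
    have := Ideal.Quotient.eq_zero_iff_mem.mpr hgd
    rw [map_sub, map_pow, map_one, sub_eq_zero] at this
    exact this
  rw [hone, hgd1] at hw
  -- conclude
  have hdq : (d : Q) = algebraMap R Q (d : R) := by
    rw [map_natCast]
  have hzero : π (g - 1) * (algebraMap R Q (d : R) + π (g - 1) * w) = 0 := by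
    have : (d : Q) * π (g - 1) + π (g - 1) ^ 2 * w = 0 := by
      linear_combination -hw
    rw [← hdq]
    linear_combination this
  have hu : IsUnit (algebraMap R Q (d : R) + π (g - 1) * w) :=
    hunit _ (N.mul_mem_right w hy) _ hd
  have hyzero : π (g - 1) = 0 := by
    obtain ⟨u, hu'⟩ := hu
    have := congrArg (· * (↑u⁻¹ : Q)) hzero
    simp only [zero_mul] at this
    rw [mul_assoc, ← hu', Units.mul_inv, mul_one] at this
    exact this
  exact Ideal.Quotient.eq_zero_iff_mem.mp hyzero
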